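/- The capacity of the 2-dimensional isotropic axial product of CHG(2) equals 1/4: lim_{n→∞} (log_2 M(n))/n^2 = 1/4, where M(n) is the number of arrays in {+1,-1}^{n×n} such that every row and every column a_0,...,a_{n-1} satisfies |sum_{k=i}^{j} a_k| ≤ 2 for all 0 ≤ i ≤ j < n. -/

import Mathlib

open Filter

/-- A word over `{+1,-1}` satisfies `CHG(b)` when all of its contiguous partial sums
have absolute value at most `b`. -/
def ChgWord (b : ℤ) {n : ℕ} (a : Fin n → ℤ) : Prop :=
  ∀ i j : Fin n, i ≤ j → |∑ k ∈ Finset.Icc i j, a k| ≤ b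

/-- `ChgSquare n` is the number of `n × n` arrays over `{+1,-1}` all of whose rows
and columns satisfy `CHG(2)`. -/
noncomputable def ChgSquare (n : ℕ) : ℕ :=
  Nat.card {Γ : Fin n → Fin n → ℤ //
    (∀ i j : Fin n, Γ i j = 1 ∨ Γ i j = -1) ∧
    (∀ i : Fin n, ChgWord 2 (fun j => Γ i j)) ∧
    (∀ j : Fin n, ChgWord 2 (fun i => Γ i j))}

open Finset

namespace Chg7

/-- values are ±1 -/
def pm (a : ℕ → ℤ) : Prop := ∀ k, a k = 1 ∨ a k = -1

def Paired (φ n : ℕ) (a : ℕ → ℤ) : Prop :=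
  ∀ j, j % 2 = φ → j + 1 < n → a (j + 1) = -a j

def NatChg (n : ℕ) (a : ℕ → ℤ) : Prop :=
  ∀ i j, i ≤ j → j < n → |∑ k ∈ Finset.Icc i j, a k| ≤ 2

lemma sum_Icc_peel (a : ℕ → ℤ) {i j : ℕ} (h : i ≤ j) :
    ∑ k ∈ Finset.Icc i j, a k = a i + ∑ k ∈ Finset.Icc (i+1) j, a k := by
  rw [Finset.Icc_eq_cons_Ioc h, Finset.sum_cons, Finset.Icc_add_one_left_eq_Ioc]

lemma sum_Icc_top (a : ℕ → ℤ) {i j : ℕ} (h : i ≤ j + 1) :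
    ∑ k ∈ Finset.Icc i (j+1), a k = (∑ k ∈ Finset.Icc i j, a k) + a (j+1) := by
  exact Finset.sum_Icc_succ_top h a


lemma abs_le_one (a : ℕ → ℤ) (hpm : pm a) (k : ℕ) : |a k| ≤ 1 := by
  rcases hpm k with h | h <;> rw [h] <;> norm_num

lemma aligned_sum (φ n : ℕ) (a : ℕ → ℤ) (hpm : pm a) (hp : Paired φ n a) :
    ∀ d i j, j - i = d → i % 2 = φ → i ≤ j → j < n →
      |∑ k ∈ Finset.Icc i j, a k| ≤ 1 := by
  intro d
  induction d using Nat.strong_induction_on with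
  | _ d ih =>
    intro i j hd hi hij hj
    rcases Nat.lt_or_ge i j with hlt | hge
    · have hstep : a (i+1) = -a i := hp i hi (by omega)
      rcases Nat.lt_or_ge (i+1) j with hlt2 | hge2
      · have h1 : ∑ k ∈ Finset.Icc i j, a k = ∑ k ∈ Finset.Icc (i+2) j, a k := by
          rw [sum_Icc_peel a (by omega : i ≤ j), sum_Icc_peel a (by omega : i + 1 ≤ j)]
          rw [hstep]; ring_nf
        rw [h1]
        exact ih (j - (i+2)) (by omega) (i+2) j rfl (by omega) (by omega) hj
      · have hj' : j = i + 1 := by omega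
        subst hj'
        have h1 : ∑ k ∈ Finset.Icc i (i+1), a k = a i + a (i+1) := by
          rw [sum_Icc_peel a (by omega : i ≤ i+1), Finset.Icc_self, Finset.sum_singleton]
        rw [h1, hstep]; norm_num
    · have hj' : j = i := by omega
      rw [hj', Finset.Icc_self, Finset.sum_singleton]
      exact abs_le_one a hpm i

lemma paired_natChg (φ n : ℕ) (a : ℕ → ℤ) (hpm : pm a) (hφ : φ ≤ 1)
    (hp : Paired φ n a) : NatChg n a := by
  intro i j hij hj
  by_cases hi : i % 2 = φ
  · calc |∑ k ∈ Finset.Icc i j, a k| ≤ 1 :=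
          aligned_sum φ n a hpm hp (j - i) i j rfl hi hij hj
      _ ≤ 2 := by norm_num
  · rcases Nat.lt_or_ge i j with hlt | hge
    · rw [sum_Icc_peel a hij]
      have h1 : (i+1) % 2 = φ := by omega
      have h2 := aligned_sum φ n a hpm hp (j - (i+1)) (i+1) j rfl h1 (by omega) hj
      have h3 := abs_le_one a hpm i
      calc |a i + ∑ k ∈ Finset.Icc (i+1) j, a k|
          ≤ |a i| + |∑ k ∈ Finset.Icc (i+1) j, a k| := abs_add_le _ _
        _ ≤ 2 := by omega
    · have hj' : j = i := by omega
      rw [hj', Finset.Icc_self, Finset.sum_singleton]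
      have := abs_le_one a hpm i; omega

/-- the run lemma: from a doubled position, with no doubled positions strictly
between, partial sums take value `2*(a i)` at odd distances, `a i` at even. -/
lemma run_sum (n : ℕ) (a : ℕ → ℤ) (i j : ℕ) (hij : i < j)
    (hdi : a (i+1) = a i)
    (hbet : ∀ k, i < k → k < j → a (k+1) = -a k) :
    ∀ k, i + 1 ≤ k → k ≤ j →
      ((k - i) % 2 = 1 → a k = a i ∧ ∑ l ∈ Finset.Icc i k, a l = 2 * a i) ∧
      ((k - i) % 2 = 0 → a k = -a i ∧ ∑ l ∈ Finset.Icc i k, a l = a i) := by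
  intro k hk1
  induction k, hk1 using Nat.le_induction with
  | base =>
    intro _
    constructor
    · intro _
      refine ⟨hdi, ?_⟩
      rw [sum_Icc_peel a (by omega : i ≤ i+1), Finset.Icc_self, Finset.sum_singleton, hdi]
      ring
    · intro h; omega
  | succ k hk ihk =>
    intro hk2
    have ih := ihk (by omega)
    have hstep : a (k+1) = -a k := hbet k (by omega) (by omega)
    have hsum : ∑ l ∈ Finset.Icc i (k+1), a l = (∑ l ∈ Finset.Icc i k, a l) + a (k+1) :=
      sum_Icc_top a (by omega)
    constructor
    · intro hodd
      have heven : (k - i) % 2 = 0 := by omega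
      obtain ⟨h1, h2⟩ := ih.2 heven
      refine ⟨by rw [hstep, h1]; ring, ?_⟩
      rw [hsum, h2, hstep, h1]; ring
    · intro heven
      have hodd : (k - i) % 2 = 1 := by omega
      obtain ⟨h1, h2⟩ := ih.1 hodd
      refine ⟨by rw [hstep, h1], ?_⟩
      rw [hsum, hstep, h1, h2]; ring

/-- doubled positions have even mutual distance -/
lemma even_diff (n : ℕ) (a : ℕ → ℤ) (hpm : pm a) (hc : NatChg n a) :
    ∀ d i j, j - i = d → i < j →
      (i + 1 < n ∧ a (i+1) = a i) → (j + 1 < n ∧ a (j+1) = a j) →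
      (j - i) % 2 = 0 := by
  intro d
  induction d using Nat.strong_induction_on with
  | _ d ih =>
    intro i j hd hij hdi hdj
    by_cases hex : ∃ k, i < k ∧ k < j ∧ k + 1 < n ∧ a (k+1) = a k
    · obtain ⟨k, hk1, hk2, hk3, hk4⟩ := hex
      have e1 := ih (k - i) (by omega) i k rfl hk1 hdi ⟨hk3, hk4⟩
      have e2 := ih (j - k) (by omega) k j rfl hk2 ⟨hk3, hk4⟩ hdj
      omega
    · by_contra hodd
      have hbet : ∀ k, i < k → k < j → a (k+1) = -a k := by
        intro k h1 h2
        have hkn : k + 1 < n := by omega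
        have : ¬ (a (k+1) = a k) := fun h => hex ⟨k, h1, h2, hkn, h⟩
        rcases hpm k with h | h <;> rcases hpm (k+1) with h' | h' <;> omega
      have hrun := (run_sum n a i j hij hdi.2 hbet j (by omega) le_rfl).1 (by omega)
      obtain ⟨haj, hsum⟩ := hrun
      have hsum2 : ∑ l ∈ Finset.Icc i (j+1), a l = 3 * a i := by
        rw [sum_Icc_top a (by omega), hsum, hdj.2, haj]; ring
      have h3 := hc i (j+1) (by omega) hdj.1
      rw [hsum2] at h3
      rcases hpm i with h | h <;> rw [h] at h3 <;> norm_num at h3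

lemma natChg_paired (n : ℕ) (a : ℕ → ℤ) (hpm : pm a) (hc : NatChg n a) :
    Paired 0 n a ∨ Paired 1 n a := by
  by_contra h
  push_neg at h
  obtain ⟨h0, h1⟩ := h
  simp only [Paired, not_forall] at h0 h1
  obtain ⟨j0, hj0p, hj0n, hj0⟩ := h0
  obtain ⟨j1, hj1p, hj1n, hj1⟩ := h1
  have d0 : a (j0+1) = a j0 := by
    rcases hpm j0 with h | h <;> rcases hpm (j0+1) with h' | h' <;> omega
  have d1 : a (j1+1) = a j1 := by
    rcases hpm j1 with h | h <;> rcases hpm (j1+1) with h' | h' <;> omega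
  rcases lt_trichotomy j0 j1 with hlt | heq | hgt
  · have := even_diff n a hpm hc (j1 - j0) j0 j1 rfl hlt ⟨hj0n, d0⟩ ⟨hj1n, d1⟩
    omega
  · omega
  · have := even_diff n a hpm hc (j0 - j1) j1 j0 rfl hgt ⟨hj1n, d1⟩ ⟨hj0n, d0⟩
    omega


/-! ### Fin conversion -/

def ext (n : ℕ) (a : Fin n → ℤ) : ℕ → ℤ := fun k => if h : k < n then a ⟨k, h⟩ else 1

lemma ext_lt {n : ℕ} (a : Fin n → ℤ) {k : ℕ} (h : k < n) : ext n a k = a ⟨k, h⟩ :=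
  dif_pos h

lemma pm_ext {n : ℕ} (a : Fin n → ℤ) (h : ∀ j, a j = 1 ∨ a j = -1) : pm (ext n a) := by
  intro k
  unfold ext
  split
  · exact h _
  · left; rfl

lemma sum_Icc_fin {n : ℕ} (a : Fin n → ℤ) (i j : Fin n) :
    ∑ k ∈ Finset.Icc i j, a k = ∑ k ∈ Finset.Icc i.val j.val, ext n a k := by
  rw [← Fin.map_valEmbedding_Icc, Finset.sum_map]
  apply Finset.sum_congr rfl
  intro k _
  simp [ext, Fin.valEmbedding, k.isLt]

lemma chgWord_iff_natChg {n : ℕ} (a : Fin n → ℤ) :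
    ChgWord 2 a ↔ NatChg n (ext n a) := by
  constructor
  · intro h i j hij hj
    have hi : i < n := lt_of_le_of_lt hij hj
    have := h ⟨i, hi⟩ ⟨j, hj⟩ hij
    rwa [sum_Icc_fin] at this
  · intro h i j hij
    have := h i.val j.val hij j.isLt
    rwa [← sum_Icc_fin] at this

/-- forward: every CHG(2) ±1 word has a pairing phase -/
lemma chg_phase {n : ℕ} (a : Fin n → ℤ) (hpm : ∀ j, a j = 1 ∨ a j = -1)
    (h : ChgWord 2 a) : ∃ φ : Fin 2, Paired φ.val n (ext n a) := by
  rcases natChg_paired n (ext n a) (pm_ext a hpm) ((chgWord_iff_natChg a).mp h) with h | h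
  · exact ⟨0, h⟩
  · exact ⟨1, h⟩

/-- backward: a paired ±1 word is CHG(2) -/
lemma phase_chg {n : ℕ} (a : Fin n → ℤ) (hpm : ∀ j, a j = 1 ∨ a j = -1)
    (φ : Fin 2) (hp : Paired φ.val n (ext n a)) : ChgWord 2 a :=
  (chgWord_iff_natChg a).mpr
    (paired_natChg φ.val n (ext n a) (pm_ext a hpm) (by omega) hp)


/-! ### Lower bound -/

lemma half_lt (n : ℕ) {k : ℕ} (hk : k < n) : k / 2 < (n + 1) / 2 := by omega

/-- the checkerboard-block construction -/
def cons (n : ℕ) (c : Fin ((n+1)/2) → Fin ((n+1)/2) → Bool) : Fin n → Fin n → ℤ :=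
  fun i j => (-1 : ℤ) ^ (i.val + j.val) *
    (if c ⟨i.val / 2, half_lt n i.isLt⟩ ⟨j.val / 2, half_lt n j.isLt⟩ then 1 else -1)

lemma cons_pm (n : ℕ) (c : Fin ((n+1)/2) → Fin ((n+1)/2) → Bool) (i j : Fin n) :
    cons n c i j = 1 ∨ cons n c i j = -1 := by
  unfold cons
  rcases Nat.even_or_odd (i.val + j.val) with he | ho
  · rw [he.neg_one_pow]
    split <;> simp
  · rw [ho.neg_one_pow]
    split <;> simp

lemma cons_paired_row (n : ℕ) (c : Fin ((n+1)/2) → Fin ((n+1)/2) → Bool) (i : Fin n) :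
    Paired 0 n (ext n (fun j => cons n c i j)) := by
  intro j hj hjn
  rw [ext_lt _ hjn, ext_lt _ (by omega)]
  unfold cons
  have hdiv : (j + 1) / 2 = j / 2 := by omega
  have hfin : (⟨(j+1)/2, half_lt n hjn⟩ : Fin ((n+1)/2)) = ⟨j/2, half_lt n (by omega)⟩ :=
    Fin.ext (by simpa using hdiv)
  rw [hfin]
  have : i.val + (j + 1) = (i.val + j) + 1 := by omega
  rw [this, pow_succ]
  ring

lemma cons_paired_col (n : ℕ) (c : Fin ((n+1)/2) → Fin ((n+1)/2) → Bool) (j : Fin n) :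
    Paired 0 n (ext n (fun i => cons n c i j)) := by
  intro i hi hin
  rw [ext_lt _ hin, ext_lt _ (by omega)]
  unfold cons
  have hdiv : (i + 1) / 2 = i / 2 := by omega
  have hfin : (⟨(i+1)/2, half_lt n hin⟩ : Fin ((n+1)/2)) = ⟨i/2, half_lt n (by omega)⟩ :=
    Fin.ext (by simpa using hdiv)
  rw [hfin]
  have : (i + 1) + j.val = (i + j.val) + 1 := by omega
  rw [this, pow_succ]
  ring

lemma lower_bound (n : ℕ) : 2 ^ (((n+1)/2) * ((n+1)/2)) ≤ ChgSquare n := by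
  classical
  set m := (n+1)/2 with hm
  set S := {Γ : Fin n → Fin n → ℤ //
    (∀ i j : Fin n, Γ i j = 1 ∨ Γ i j = -1) ∧
    (∀ i : Fin n, ChgWord 2 (fun j => Γ i j)) ∧
    (∀ j : Fin n, ChgWord 2 (fun i => Γ i j))} with hS
  have hfin : Finite S := by
    apply Finite.of_injective (fun Γ : S => fun i j => decide (Γ.1 i j = 1))
    intro Γ1 Γ2 h
    apply Subtype.ext
    funext i j
    have h1 := congrFun (congrFun h i) j
    simp only [decide_eq_decide] at h1
    rcases Γ1.2.1 i j with e1 | e1 <;> rcases Γ2.2.1 i j with e2 | e2 <;>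
      rw [e1, e2] at h1 ⊢ <;> simp_all
  have hmap : ∀ c : Fin m → Fin m → Bool, ∃ Γ : S, Γ.1 = cons n c := by
    intro c
    refine ⟨⟨cons n c, cons_pm n c, ?_, ?_⟩, rfl⟩
    · intro i
      exact phase_chg _ (fun j => cons_pm n c i j) 0 (cons_paired_row n c i)
    · intro j
      exact phase_chg _ (fun i => cons_pm n c i j) 0 (cons_paired_col n c j)
  have hinj : Function.Injective
      (fun c : Fin m → Fin m → Bool => (hmap c).choose) := by
    intro c1 c2 h
    replace h : (hmap c1).choose = (hmap c2).choose := h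
    have h1 : cons n c1 = cons n c2 := by
      rw [← (hmap c1).choose_spec, ← (hmap c2).choose_spec, h]
    funext p q
    have hp : 2 * p.val < n := by omega
    have hq : 2 * q.val < n := by omega
    have h2 := congrFun (congrFun h1 ⟨2*p.val, hp⟩) ⟨2*q.val, hq⟩
    unfold cons at h2
    have hev : Even (2*p.val + 2*q.val) := ⟨p.val + q.val, by ring⟩
    rw [hev.neg_one_pow] at h2
    have hpf : (⟨2*p.val/2, half_lt n hp⟩ : Fin m) = p := Fin.ext (by simp)
    have hqf : (⟨2*q.val/2, half_lt n hq⟩ : Fin m) = q := Fin.ext (by simp)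
    rw [hpf, hqf] at h2
    rcases Bool.eq_false_or_eq_true (c1 p q) with e1 | e1 <;>
      rcases Bool.eq_false_or_eq_true (c2 p q) with e2 | e2 <;>
      rw [e1, e2] at h2 ⊢ <;> simp_all
  have hle := Nat.card_le_card_of_injective _ hinj
  have hcard : Nat.card (Fin m → Fin m → Bool) = 2 ^ (m * m) := by
    simp [Nat.card_eq_fintype_card, Fintype.card_fun, pow_mul]
  rw [hcard] at hle
  exact hle


/-! ### Upper bound: pairing graph -/

/-- pair relation on ℕ indices given a phase -/
def pr (φ : Fin 2) (j j' : ℕ) : Prop :=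
  (j' = j + 1 ∧ j % 2 = φ.val) ∨ (j = j' + 1 ∧ j' % 2 = φ.val)

lemma pr_symm {φ : Fin 2} {j j' : ℕ} (h : pr φ j j') : pr φ j' j := by
  rcases h with h | h
  · exact Or.inr h
  · exact Or.inl h

lemma pr_ne {φ : Fin 2} {j j' : ℕ} (h : pr φ j j') : j ≠ j' := by
  rcases h with h | h <;> omega

/-- the pairing graph on cells -/
def G (n : ℕ) (φr φc : Fin n → Fin 2) : SimpleGraph (Fin n × Fin n) where
  Adj v w := (v.1 = w.1 ∧ pr (φr v.1) v.2.val w.2.val) ∨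
             (v.2 = w.2 ∧ pr (φc v.2) v.1.val w.1.val)
  symm := by
    constructor
    intro v w h
    rcases h with ⟨h1, h2⟩ | ⟨h1, h2⟩
    · exact Or.inl ⟨h1.symm, h1 ▸ pr_symm h2⟩
    · exact Or.inr ⟨h1.symm, h1 ▸ pr_symm h2⟩
  loopless := by
    constructor
    intro v h
    rcases h with ⟨h1, h2⟩ | ⟨h1, h2⟩ <;> exact pr_ne h2 rfl

/-- sign-twisted array -/
def bfun (n : ℕ) (Γ : Fin n → Fin n → ℤ) (v : Fin n × Fin n) : ℤ :=
  (-1 : ℤ) ^ (v.1.val + v.2.val) * Γ v.1 v.2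

lemma paired_step {n : ℕ} (a : Fin n → ℤ) {φ : Fin 2}
    (hp : Paired φ.val n (ext n a)) {j j' : Fin n}
    (h1 : j'.val = j.val + 1) (h2 : j.val % 2 = φ.val) : a j' = -a j := by
  have := hp j.val h2 (by omega)
  rw [ext_lt _ (by omega : j.val + 1 < n), ext_lt _ j.isLt] at this
  have hj' : j' = ⟨j.val + 1, by omega⟩ := Fin.ext (by simpa using h1)
  rw [hj', this]

lemma bfun_adj {n : ℕ} (φr φc : Fin n → Fin 2) (Γ : Fin n → Fin n → ℤ)
    (hrow : ∀ i, Paired (φr i).val n (ext n fun j => Γ i j))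
    (hcol : ∀ j, Paired (φc j).val n (ext n fun i => Γ i j)) :
    ∀ v w, (G n φr φc).Adj v w → bfun n Γ v = bfun n Γ w := by
  have hstepr : ∀ v w : Fin n × Fin n, v.1 = w.1 → w.2.val = v.2.val + 1 →
      v.2.val % 2 = (φr v.1).val → bfun n Γ v = bfun n Γ w := by
    intro v w h1 h2 h3
    have heq : Γ v.1 w.2 = -Γ v.1 v.2 := paired_step (fun j => Γ v.1 j) (hrow v.1) h2 h3
    unfold bfun
    rw [← h1, heq, h2]
    have : v.1.val + (v.2.val + 1) = (v.1.val + v.2.val) + 1 := by omega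
    rw [this, pow_succ]; ring
  have hstepc : ∀ v w : Fin n × Fin n, v.2 = w.2 → w.1.val = v.1.val + 1 →
      v.1.val % 2 = (φc v.2).val → bfun n Γ v = bfun n Γ w := by
    intro v w h1 h2 h3
    have heq : Γ w.1 v.2 = -Γ v.1 v.2 := paired_step (fun i => Γ i v.2) (hcol v.2) h2 h3
    unfold bfun
    rw [← h1, heq, h2]
    have : (v.1.val + 1) + v.2.val = (v.1.val + v.2.val) + 1 := by omega
    rw [this, pow_succ]; ring
  intro v w h
  rcases h with ⟨h1, h2 | h2⟩ | ⟨h1, h2 | h2⟩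
  · exact hstepr v w h1 h2.1 h2.2
  · exact (hstepr w v h1.symm h2.1 (by rw [← h1]; exact h2.2)).symm
  · exact hstepc v w h1 h2.1 h2.2
  · exact (hstepc w v h1.symm h2.1 (by rw [← h1]; exact h2.2)).symm

lemma bfun_const {n : ℕ} (φr φc : Fin n → Fin 2) (Γ : Fin n → Fin n → ℤ)
    (hadj : ∀ v w, (G n φr φc).Adj v w → bfun n Γ v = bfun n Γ w)
    {v w : Fin n × Fin n}
    (h : (G n φr φc).connectedComponentMk v = (G n φr φc).connectedComponentMk w) :
    bfun n Γ v = bfun n Γ w := by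
  have hr : (G n φr φc).Reachable v w := (SimpleGraph.ConnectedComponent.eq).mp h
  have key : ∀ {x y : Fin n × Fin n}, (G n φr φc).Walk x y → bfun n Γ x = bfun n Γ y := by
    intro x y p
    induction p with
    | nil => rfl
    | cons hadj' p ih => exact (hadj _ _ hadj').trans ih
  exact hr.elim fun p => key p


/-! ### Component count -/

/-- boundary cells -/
def Bd (n : ℕ) (v : Fin n × Fin n) : Prop :=
  v.1.val = 0 ∨ v.1.val + 1 = n ∨ v.2.val = 0 ∨ v.2.val + 1 = n

instance (n : ℕ) : DecidablePred (Bd n) := fun v => by unfold Bd; infer_instance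

lemma partner_exists (n : ℕ) (φ : Fin 2) (i : Fin n)
    (h1 : i.val ≠ 0) (h2 : i.val + 1 ≠ n) :
    ∃ i' : Fin n, i'.val ≠ i.val ∧ pr φ i.val i'.val := by
  have hlt := i.isLt
  have hφ := φ.isLt
  by_cases hp : i.val % 2 = φ.val
  · exact ⟨⟨i.val + 1, by omega⟩, by simp, Or.inl ⟨rfl, hp⟩⟩
  · exact ⟨⟨i.val - 1, by omega⟩, by simp; omega, Or.inr ⟨by simp; omega, by simp; omega⟩⟩

lemma card_bd (n : ℕ) :
    (Finset.univ.filter (fun v : Fin n × Fin n => Bd n v)).card ≤ 4 * n := by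
  classical
  have hsub : Finset.univ.filter (fun v : Fin n × Fin n => Bd n v) ⊆
      (Finset.univ.filter (fun v : Fin n × Fin n => v.1.val = 0)) ∪
      (Finset.univ.filter (fun v : Fin n × Fin n => v.1.val + 1 = n)) ∪
      (Finset.univ.filter (fun v : Fin n × Fin n => v.2.val = 0)) ∪
      (Finset.univ.filter (fun v : Fin n × Fin n => v.2.val + 1 = n)) := by
    intro v hv
    simp only [Finset.mem_filter, Finset.mem_union, Finset.mem_univ, true_and] at hv ⊢
    rcases hv with h | h | h | h
    · exact Or.inl (Or.inl (Or.inl h))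
    · exact Or.inl (Or.inl (Or.inr h))
    · exact Or.inl (Or.inr h)
    · exact Or.inr h
  have h1 : ∀ (p : Fin n × Fin n → Prop) [DecidablePred p],
      (∀ v w : Fin n × Fin n, p v → p w → v.2 = w.2 → v = w) →
      (Finset.univ.filter p).card ≤ n := by
    intro p _ hp
    calc (Finset.univ.filter p).card
        ≤ (Finset.univ : Finset (Fin n)).card := by
          apply Finset.card_le_card_of_injOn (fun v => v.2)
          · intro v _; exact Finset.mem_univ _
          · intro v hv w hw h
            simp only [Finset.mem_coe, Finset.mem_filter] at hv hw
            exact hp v w hv.2 hw.2 h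
      _ = n := by simp
  have h2 : ∀ (p : Fin n × Fin n → Prop) [DecidablePred p],
      (∀ v w : Fin n × Fin n, p v → p w → v.1 = w.1 → v = w) →
      (Finset.univ.filter p).card ≤ n := by
    intro p _ hp
    calc (Finset.univ.filter p).card
        ≤ (Finset.univ : Finset (Fin n)).card := by
          apply Finset.card_le_card_of_injOn (fun v => v.1)
          · intro v _; exact Finset.mem_univ _
          · intro v hv w hw h
            simp only [Finset.mem_coe, Finset.mem_filter] at hv hw
            exact hp v w hv.2 hw.2 h
      _ = n := by simp
  calc (Finset.univ.filter (fun v : Fin n × Fin n => Bd n v)).card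
      ≤ _ := Finset.card_le_card hsub
    _ ≤ 4 * n := by
        refine le_trans (Finset.card_union_le _ _) ?_
        refine le_trans (add_le_add (Finset.card_union_le _ _) le_rfl) ?_
        refine le_trans (add_le_add (add_le_add (Finset.card_union_le _ _) le_rfl) le_rfl) ?_
        have e1 := h1 (fun v : Fin n × Fin n => v.1.val = 0)
          (fun v w hv hw h => Prod.ext (Fin.ext (by omega)) h)
        have e2 := h1 (fun v : Fin n × Fin n => v.1.val + 1 = n)
          (fun v w hv hw h => Prod.ext (Fin.ext (by omega)) h)
        have e3 := h2 (fun v : Fin n × Fin n => v.2.val = 0)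
          (fun v w hv hw h => Prod.ext h (Fin.ext (by omega)))
        have e4 := h2 (fun v : Fin n × Fin n => v.2.val + 1 = n)
          (fun v w hv hw h => Prod.ext h (Fin.ext (by omega)))
        omega

lemma comp_card_le (n : ℕ) (φr φc : Fin n → Fin 2) :
    Nat.card (G n φr φc).ConnectedComponent ≤ n ^ 2 / 4 + 4 * n := by
  classical
  have hfin : Fintype (G n φr φc).ConnectedComponent := Fintype.ofFinite _
  rw [Nat.card_eq_fintype_card]
  set touches : (G n φr φc).ConnectedComponent → Prop :=
    fun c => ∃ v, Bd n v ∧ (G n φr φc).connectedComponentMk v = c with htouches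
  set A := Finset.univ.filter touches with hA
  set B := Finset.univ.filter (fun c => ¬ touches c) with hB
  have hsplit : A.card + B.card = Fintype.card (G n φr φc).ConnectedComponent := by
    rw [hA, hB, Finset.card_filter_add_card_filter_not, Finset.card_univ]
  -- bound on A
  have hAcard : A.card ≤ 4 * n := by
    have hle : A.card ≤ (Finset.univ.filter (fun v : Fin n × Fin n => Bd n v)).card := by
      apply Finset.card_le_card_of_injOn
        (fun c => if h : touches c then h.choose else (Quot.exists_rep c).choose)
      · intro c hc
        rw [hA] at hc
        replace hc : touches c := (Finset.mem_filter.mp hc).2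
        simp only [Finset.coe_filter, Finset.mem_univ, true_and, Set.mem_setOf_eq, dif_pos hc]
        exact hc.choose_spec.1
      · intro c1 hc1 c2 hc2 heq
        rw [hA] at hc1 hc2
        simp only [Finset.mem_coe, Finset.mem_filter, Finset.mem_univ, true_and] at hc1 hc2
        replace heq : (if h : touches c1 then h.choose else (Quot.exists_rep c1).choose) =
            (if h : touches c2 then h.choose else (Quot.exists_rep c2).choose) := heq
        rw [dif_pos hc1, dif_pos hc2] at heq
        rw [← hc1.choose_spec.2, ← hc2.choose_spec.2, heq]
    exact le_trans hle (card_bd n)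
  -- bound on B
  have hBcard : 4 * B.card ≤ n ^ 2 := by
    have hfib : ∀ c ∈ B, 4 ≤ (Finset.univ.filter
        (fun v : Fin n × Fin n => (G n φr φc).connectedComponentMk v = c)).card := by
      intro c hc
      rw [hB] at hc
      simp only [Finset.mem_filter, Finset.mem_univ, true_and] at hc
      -- representative
      obtain ⟨v, hv⟩ := Quot.exists_rep c
      have hvmk : (G n φr φc).connectedComponentMk v = c := hv
      have hnb : ¬ Bd n v := fun h => hc ⟨v, h, hvmk⟩
      unfold Bd at hnb
      push_neg at hnb
      obtain ⟨hb1, hb2, hb3, hb4⟩ := hnb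
      obtain ⟨j', hj'ne, hj'pr⟩ := partner_exists n (φr v.1) v.2 hb3 hb4
      obtain ⟨i', hi'ne, hi'pr⟩ := partner_exists n (φc v.2) v.1 hb1 hb2
      obtain ⟨i'', hi''ne, hi''pr⟩ := partner_exists n (φc j') v.1 hb1 hb2
      set vh : Fin n × Fin n := (v.1, j') with hvh
      set vv : Fin n × Fin n := (i', v.2) with hvv
      set w : Fin n × Fin n := (i'', j') with hw
      have adj1 : (G n φr φc).Adj v vh := Or.inl ⟨rfl, hj'pr⟩
      have adj2 : (G n φr φc).Adj v vv := Or.inr ⟨rfl, hi'pr⟩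
      have adj3 : (G n φr φc).Adj vh w := Or.inr ⟨rfl, hi''pr⟩
      have mk1 : (G n φr φc).connectedComponentMk vh = c := by
        rw [← hvmk]
        exact SimpleGraph.ConnectedComponent.sound adj1.reachable.symm
      have mk2 : (G n φr φc).connectedComponentMk vv = c := by
        rw [← hvmk]
        exact SimpleGraph.ConnectedComponent.sound adj2.reachable.symm
      have mk3 : (G n φr φc).connectedComponentMk w = c := by
        rw [← mk1]
        exact SimpleGraph.ConnectedComponent.sound adj3.reachable.symm
      have hsub : ({v, vh, vv, w} : Finset (Fin n × Fin n)) ⊆ Finset.univ.filter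
          (fun u => (G n φr φc).connectedComponentMk u = c) := by
        intro u hu
        simp only [Finset.mem_insert, Finset.mem_singleton] at hu
        simp only [Finset.mem_filter, Finset.mem_univ, true_and]
        rcases hu with rfl | rfl | rfl | rfl
        · exact hvmk
        · exact mk1
        · exact mk2
        · exact mk3
      have hne1 : v ≠ vh := fun h => hj'ne (congrArg Fin.val (Prod.ext_iff.mp h).2).symm
      have hne2 : v ≠ vv := fun h => hi'ne (congrArg Fin.val (Prod.ext_iff.mp h).1).symm
      have hne3 : v ≠ w := fun h => hj'ne (congrArg Fin.val (Prod.ext_iff.mp h).2).symm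
      have hne4 : vh ≠ vv := fun h => hj'ne (congrArg Fin.val (Prod.ext_iff.mp h).2)
      have hne5 : vh ≠ w := fun h => hi''ne (congrArg Fin.val (Prod.ext_iff.mp h).1).symm
      have hne6 : vv ≠ w := fun h => hj'ne (congrArg Fin.val (Prod.ext_iff.mp h).2).symm
      have hcard4 : ({v, vh, vv, w} : Finset (Fin n × Fin n)).card = 4 := by
        rw [Finset.card_insert_of_notMem (by simp [hne1, hne2, hne3]),
            Finset.card_insert_of_notMem (by simp [hne4, hne5]),
            Finset.card_insert_of_notMem (by simp [hne6]),
            Finset.card_singleton]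
      calc 4 = ({v, vh, vv, w} : Finset (Fin n × Fin n)).card := hcard4.symm
        _ ≤ _ := Finset.card_le_card hsub
    have hdisj : ∑ c ∈ Finset.univ, (Finset.univ.filter
        (fun v : Fin n × Fin n => (G n φr φc).connectedComponentMk v = c)).card =
        (Finset.univ : Finset (Fin n × Fin n)).card :=
      (Finset.card_eq_sum_card_fiberwise (fun v _ => Finset.mem_univ _)).symm
    calc 4 * B.card = ∑ _c ∈ B, 4 := by rw [Finset.sum_const, smul_eq_mul, mul_comm]
      _ ≤ ∑ c ∈ B, (Finset.univ.filter
          (fun v : Fin n × Fin n => (G n φr φc).connectedComponentMk v = c)).card :=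
        Finset.sum_le_sum hfib
      _ ≤ ∑ c ∈ Finset.univ, (Finset.univ.filter
          (fun v : Fin n × Fin n => (G n φr φc).connectedComponentMk v = c)).card :=
        Finset.sum_le_sum_of_subset (Finset.filter_subset _ _)
      _ = (Finset.univ : Finset (Fin n × Fin n)).card := hdisj
      _ = n ^ 2 := by simp [sq]
  omega


/-! ### Upper bound -/

noncomputable def embOf (n : ℕ) (φr φc : Fin n → Fin 2) :
    (G n φr φc).ConnectedComponent ↪ Fin (n ^ 2 / 4 + 4 * n) := by
  have hf : Fintype (G n φr φc).ConnectedComponent := Fintype.ofFinite _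
  refine Classical.choice (Function.Embedding.nonempty_of_card_le ?_)
  rw [Fintype.card_fin]
  have h := comp_card_le n φr φc
  rwa [Nat.card_eq_fintype_card] at h

lemma upper_bound (n : ℕ) : ChgSquare n ≤ 2 ^ (2 * n + (n ^ 2 / 4 + 4 * n)) := by
  classical
  set Bn := n ^ 2 / 4 + 4 * n with hBn
  set S := {Γ : Fin n → Fin n → ℤ //
    (∀ i j : Fin n, Γ i j = 1 ∨ Γ i j = -1) ∧
    (∀ i : Fin n, ChgWord 2 (fun j => Γ i j)) ∧
    (∀ j : Fin n, ChgWord 2 (fun i => Γ i j))} with hS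
  have hrow : ∀ (Γ : S) (i : Fin n), ∃ φ : Fin 2,
      Paired φ.val n (ext n fun j => Γ.1 i j) :=
    fun Γ i => chg_phase _ (fun j => Γ.2.1 i j) (Γ.2.2.1 i)
  have hcol : ∀ (Γ : S) (j : Fin n), ∃ φ : Fin 2,
      Paired φ.val n (ext n fun i => Γ.1 i j) :=
    fun Γ j => chg_phase _ (fun i => Γ.2.1 i j) (Γ.2.2.2 j)
  choose φR hφR using hrow
  choose φC hφC using hcol
  set F : S → ((Fin n → Fin 2) × (Fin n → Fin 2)) × (Fin Bn → Bool) :=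
    fun Γ => ((φR Γ, φC Γ), fun x => decide (∃ v : Fin n × Fin n,
      embOf n (φR Γ) (φC Γ) ((G n (φR Γ) (φC Γ)).connectedComponentMk v) = x ∧
      bfun n Γ.1 v = 1)) with hF
  have hFinj : Function.Injective F := by
    intro Γ1 Γ2 heq
    have h1 : φR Γ1 = φR Γ2 := congrArg (fun p => p.1.1) heq
    have h2 : φC Γ1 = φC Γ2 := congrArg (fun p => p.1.2) heq
    have h3 : ∀ x, (decide (∃ v : Fin n × Fin n,
        embOf n (φR Γ1) (φC Γ1) ((G n (φR Γ1) (φC Γ1)).connectedComponentMk v) = x ∧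
        bfun n Γ1.1 v = 1)) = (decide (∃ v : Fin n × Fin n,
        embOf n (φR Γ2) (φC Γ2) ((G n (φR Γ2) (φC Γ2)).connectedComponentMk v) = x ∧
        bfun n Γ2.1 v = 1)) := fun x => congrFun (congrArg (fun p => p.2) heq) x
    rw [← h1, ← h2] at h3
    -- b is constant on components, for both arrays
    have hadj1 : ∀ v w, (G n (φR Γ1) (φC Γ1)).Adj v w → bfun n Γ1.1 v = bfun n Γ1.1 w :=
      bfun_adj _ _ _ (hφR Γ1) (hφC Γ1)
    have hadj2 : ∀ v w, (G n (φR Γ1) (φC Γ1)).Adj v w → bfun n Γ2.1 v = bfun n Γ2.1 w := by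
      rw [h1, h2]
      exact bfun_adj _ _ _ (hφR Γ2) (hφC Γ2)
    have hbpm : ∀ (Γ : S) (v : Fin n × Fin n), bfun n Γ.1 v = 1 ∨ bfun n Γ.1 v = -1 := by
      intro Γ v
      unfold bfun
      rcases Nat.even_or_odd (v.1.val + v.2.val) with he | ho
      · rw [he.neg_one_pow]
        rcases Γ.2.1 v.1 v.2 with h | h <;> rw [h] <;> simp
      · rw [ho.neg_one_pow]
        rcases Γ.2.1 v.1 v.2 with h | h <;> rw [h] <;> simp
    have hbeq : ∀ v, bfun n Γ1.1 v = bfun n Γ2.1 v := by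
      intro v
      have hx := h3 (embOf n (φR Γ1) (φC Γ1) ((G n (φR Γ1) (φC Γ1)).connectedComponentMk v))
      rw [decide_eq_decide] at hx
      have hdir : ∀ (Γ Γ' : S)
          (hadj : ∀ v w, (G n (φR Γ1) (φC Γ1)).Adj v w → bfun n Γ'.1 v = bfun n Γ'.1 w),
          (∃ w : Fin n × Fin n,
            embOf n (φR Γ1) (φC Γ1) ((G n (φR Γ1) (φC Γ1)).connectedComponentMk w) =
            embOf n (φR Γ1) (φC Γ1) ((G n (φR Γ1) (φC Γ1)).connectedComponentMk v) ∧
            bfun n Γ'.1 w = 1) → bfun n Γ'.1 v = 1 := by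
        intro Γ Γ' hadj ⟨w, hw1, hw2⟩
        have hmk := (embOf n (φR Γ1) (φC Γ1)).injective hw1
        exact (bfun_const _ _ _ hadj hmk).symm.trans hw2
      rcases hbpm Γ1 v with e1 | e1
      · have : bfun n Γ2.1 v = 1 := hdir Γ1 Γ2 hadj2 (hx.mp ⟨v, rfl, e1⟩)
        rw [e1, this]
      · rcases hbpm Γ2 v with e2 | e2
        · have : bfun n Γ1.1 v = 1 := hdir Γ2 Γ1 hadj1 (hx.mpr ⟨v, rfl, e2⟩)
          omega
        · rw [e1, e2]
    apply Subtype.ext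
    funext i j
    have hb := hbeq (i, j)
    unfold bfun at hb
    rcases Nat.even_or_odd (i.val + j.val) with he | ho
    · rwa [he.neg_one_pow, one_mul, one_mul] at hb
    · rw [ho.neg_one_pow] at hb
      exact mul_left_cancel₀ (by norm_num) hb
  have hle := Nat.card_le_card_of_injective F hFinj
  have hcard : Nat.card (((Fin n → Fin 2) × (Fin n → Fin 2)) × (Fin Bn → Bool)) =
      2 ^ (2 * n + Bn) := by
    simp [Nat.card_eq_fintype_card, Fintype.card_fun, pow_add, two_mul, pow_mul]
  rw [hcard] at hle
  exact hle

end Chg7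

open Chg7

/-- The capacity of the 2-dimensional isotropic axial product of `CHG(2)` equals
`1/4`: `lim_{n→∞} log₂(ChgSquare n) / n² = 1/4`. -/
theorem stmt7 :
    Tendsto (fun n : ℕ => Real.logb 2 (ChgSquare n) / (n : ℝ) ^ 2)
      atTop (nhds (1 / 4)) := by
  have hlogb_pow : ∀ k : ℕ, Real.logb 2 ((2 : ℝ) ^ k) = k := by
    intro k
    rw [Real.logb_pow, Real.logb_self_eq_one (by norm_num), mul_one]
  have hup : Filter.Tendsto (fun n : ℕ => 1 / 4 + 6 / (n : ℝ)) Filter.atTop (nhds (1 / 4)) := by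
    have := tendsto_const_nhds (x := (1/4 : ℝ)) (f := Filter.atTop (α := ℕ)) |>.add
      (tendsto_const_div_atTop_nhds_zero_nat 6)
    simpa using this
  refine tendsto_of_tendsto_of_tendsto_of_le_of_le' tendsto_const_nhds hup ?_ ?_
  · -- lower bound : 1/4 ≤ logb 2 (ChgSquare n) / n²
    filter_upwards [Filter.eventually_ge_atTop 1] with n hn
    set m := (n + 1) / 2 with hm
    have hlow := lower_bound n
    have hnr : (0 : ℝ) < (n : ℝ) := by exact_mod_cast hn
    have hcast : ((2 : ℝ) ^ (m * m)) ≤ (ChgSquare n : ℝ) := by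
      calc ((2 : ℝ) ^ (m * m)) = ((2 ^ (m * m) : ℕ) : ℝ) := by push_cast; ring
        _ ≤ (ChgSquare n : ℝ) := Nat.cast_le.mpr hlow
    have hlogb : ((m * m : ℕ) : ℝ) ≤ Real.logb 2 (ChgSquare n) := by
      have h1 : Real.logb 2 ((2 : ℝ) ^ (m * m)) ≤ Real.logb 2 (ChgSquare n) :=
        Real.logb_le_logb_of_le (by norm_num) (by positivity) hcast
      rwa [hlogb_pow] at h1
    have hmn : (n : ℝ) / 2 ≤ (m : ℝ) := by
      have : n ≤ 2 * m := by omega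
      have := (Nat.cast_le (α := ℝ)).mpr this
      push_cast at this
      linarith
    have hmm : (n : ℝ) ^ 2 / 4 ≤ ((m * m : ℕ) : ℝ) := by
      push_cast
      have h0 : (0 : ℝ) ≤ (n : ℝ) / 2 := by positivity
      nlinarith
    rw [le_div_iff₀ (by positivity)]
    push_cast at hmm hlogb
    nlinarith
  · -- upper bound : logb 2 (ChgSquare n) / n² ≤ 1/4 + 6/n
    filter_upwards [Filter.eventually_ge_atTop 1] with n hn
    have hnr : (0 : ℝ) < (n : ℝ) := by exact_mod_cast hn
    have hupn := upper_bound n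
    have hpos : (0 : ℕ) < ChgSquare n := lt_of_lt_of_le (Nat.pow_pos (by norm_num)) (lower_bound n)
    have hcast : (ChgSquare n : ℝ) ≤ (2 : ℝ) ^ (2 * n + (n ^ 2 / 4 + 4 * n)) := by
      calc (ChgSquare n : ℝ) ≤ ((2 ^ (2 * n + (n ^ 2 / 4 + 4 * n)) : ℕ) : ℝ) :=
            Nat.cast_le.mpr hupn
        _ = (2 : ℝ) ^ (2 * n + (n ^ 2 / 4 + 4 * n)) := by push_cast; ring
    have hlogb : Real.logb 2 (ChgSquare n) ≤ ((2 * n + (n ^ 2 / 4 + 4 * n) : ℕ) : ℝ) := by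
      have h1 : Real.logb 2 (ChgSquare n) ≤ Real.logb 2 ((2 : ℝ) ^ (2 * n + (n ^ 2 / 4 + 4 * n))) :=
        Real.logb_le_logb_of_le (by norm_num) (by exact_mod_cast hpos) hcast
      rwa [hlogb_pow] at h1
    have hdivle : ((n ^ 2 / 4 : ℕ) : ℝ) ≤ (n : ℝ) ^ 2 / 4 := by
      have := Nat.cast_div_le (m := n ^ 2) (n := 4) (α := ℝ)
      push_cast at this ⊢
      simpa using this
    have hle2 : Real.logb 2 (ChgSquare n) ≤ (n : ℝ) ^ 2 / 4 + 6 * n := by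
      have : ((2 * n + (n ^ 2 / 4 + 4 * n) : ℕ) : ℝ) ≤ (n : ℝ) ^ 2 / 4 + 6 * n := by
        push_cast
        linarith
      linarith
    rw [div_le_iff₀ (by positivity)]
    have h6 : (1 / 4 + 6 / (n : ℝ)) * (n : ℝ) ^ 2 = (n : ℝ) ^ 2 / 4 + 6 * n := by
      field_simp
    rw [h6]
    exact hle2
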